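/- For nonnegative integers k, ℓ and 1 ≤ m ≤ n, the number of (k,ℓ)-pullback (m,n)-parking functions equals the sum over all π ∈ S_{m,n} of the product over i = 1 to n of (B(π_i) + F(π_i) + 1). -/

import Mathlib

/-- Try to park a car with preference `a` under the `(k,l)`-pullback rule on a
street with spots `1,…,n`, where `occ` is the set of occupied spots.  The car
parks at `a` if it is free; otherwise it checks `a-1,…,a-k` (not before spot 1)
and parks in the first free spot found; failing that it checks `a+1,…,a+l`
(not beyond spot `n`).  Returns the spot where the car parks, if any. -/
def pullTry (k l n : ℕ) (occ : Finset ℕ) (a : ℕ) : Option ℕ :=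
  if a ∉ occ then some a
  else
    match ((List.range k).map (fun j => a - (j + 1))).find?
        (fun s => decide (1 ≤ s ∧ s ∉ occ)) with
    | some s => some s
    | none =>
        ((List.range l).map (fun j => a + (j + 1))).find?
          (fun s => decide (s ≤ n ∧ s ∉ occ))

/-- Park a list of cars sequentially by the `(k,l)`-pullback rule, returning the
list of spots where they park (in order) if all of them park. -/
def pullRunAux (k l n : ℕ) : List ℕ → Finset ℕ → Option (List ℕ)
  | [], _ => some []
  | a :: rest, occ =>
    match pullTry k l n occ a with
    | none => none
    | some s => (pullRunAux k l n rest (insert s occ)).map (fun t => s :: t)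

def pullRun (k l n : ℕ) (prefs : List ℕ) : Option (List ℕ) :=
  pullRunAux k l n prefs ∅

/-- The `k`-Naples rule: back up at most `k` spots, then drive forward all the
way to spot `n`. -/
def naplesTry (k n : ℕ) (occ : Finset ℕ) (a : ℕ) : Option ℕ :=
  if a ∉ occ then some a
  else
    match ((List.range k).map (fun j => a - (j + 1))).find?
        (fun s => decide (1 ≤ s ∧ s ∉ occ)) with
    | some s => some s
    | none => (List.range' (a + 1) (n - a)).find? (fun s => decide (s ∉ occ))

def naplesRunAux (k n : ℕ) : List ℕ → Finset ℕ → Option (List ℕ)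
  | [], _ => some []
  | a :: rest, occ =>
    match naplesTry k n occ a with
    | none => none
    | some s => (naplesRunAux k n rest (insert s occ)).map (fun t => s :: t)

def naplesRun (k n : ℕ) (prefs : List ℕ) : Option (List ℕ) :=
  naplesRunAux k n prefs ∅

/-- The classical rule: park in the first free spot among `a, a+1, …, n`. -/
def classicalTry (n : ℕ) (occ : Finset ℕ) (a : ℕ) : Option ℕ :=
  (List.range' a (n + 1 - a)).find? (fun s => decide (s ∉ occ))

def classicalRunAux (n : ℕ) : List ℕ → Finset ℕ → Option (List ℕ)
  | [], _ => some []
  | a :: rest, occ =>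
    match classicalTry n occ a with
    | none => none
    | some s => (classicalRunAux n rest (insert s occ)).map (fun t => s :: t)

def classicalRun (n : ℕ) (prefs : List ℕ) : Option (List ℕ) :=
  classicalRunAux n prefs ∅

/-- The list of (1-based) preferences encoded by a tuple `α ∈ [n]^m`. -/
def prefList {m n : ℕ} (α : Fin m → Fin n) : List ℕ :=
  List.ofFn (fun i => (α i : ℕ) + 1)

/-- The finset of `(k,l)`-pullback `(m,n)`-parking functions. -/
def pullPFs (k l m n : ℕ) : Finset (Fin m → Fin n) :=
  Finset.univ.filter (fun α => (pullRun k l n (prefList α)).isSome = true)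

/-- The finset of `k`-Naples `(m,n)`-parking functions. -/
def naplesPFs (k m n : ℕ) : Finset (Fin m → Fin n) :=
  Finset.univ.filter (fun α => (naplesRun k n (prefList α)).isSome = true)

/-- The finset of classical `(m,n)`-parking functions. -/
def classicalPFs (m n : ℕ) : Finset (Fin m → Fin n) :=
  Finset.univ.filter (fun α => (classicalRun n (prefList α)).isSome = true)

/-- `outcomeOf spots i = j+1` if car `j+1` (0-indexed `j`) parked in spot `i`,
and `0` if spot `i` is vacant.  Here `spots` lists the spots of cars `1,…,m`. -/
def outcomeOf (spots : List ℕ) (i : ℕ) : ℕ :=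
  match spots.findIdx? (· == i) with
  | some j => j + 1
  | none => 0

/-- The outcome of a `(k,l)`-pullback parking function, as a function sending
the (0-based) spot index `i` to the label of the car parked in spot `i+1`
(or `0` if vacant). -/
def pullOutcome (k l n : ℕ) {m : ℕ} (α : Fin m → Fin n) : Fin n → ℕ :=
  fun i => outcomeOf ((pullRun k l n (prefList α)).getD []) ((i : ℕ) + 1)

/-- The outcome of a classical parking function. -/
def classicalOutcome (n : ℕ) {m : ℕ} (α : Fin m → Fin n) : Fin n → ℕ :=
  fun i => outcomeOf ((classicalRun n (prefList α)).getD []) ((i : ℕ) + 1)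

/-- `S_{m,n}`: arrangements of the multiset `{0,…,0} ∪ [m]` with `n - m`
zeros, as functions on the `n` positions. -/
def SmnSet (m n : ℕ) : Finset (Fin n → ℕ) :=
  ((Finset.univ : Finset (Fin n → Fin (m + 1))).image
      (fun π i => (π i : ℕ))).filter
    (fun π => Finset.univ.val.map π =
      Multiset.replicate (n - m) 0 + (Multiset.range m).map (· + 1))

/-- Read an arrangement `π` at the 1-based position `t` (zero outside `[1,n]`). -/
def at1 {n : ℕ} (π : Fin n → ℕ) (t : ℕ) : ℕ :=
  if h : 1 ≤ t ∧ t ≤ n then π ⟨t - 1, by omega⟩ else 0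

/-- The spots occupied by the cars with labels `< c` (those that parked before
car `c`), as read off from the outcome `π`. -/
def occBefore {n : ℕ} (π : Fin n → ℕ) (c : ℕ) : Finset ℕ :=
  (Finset.Icc 1 n).filter (fun s => 0 < at1 π s ∧ at1 π s < c)

/-- `Right(π_i)`: the length of the longest consecutive run
`π_{i+1}, …, π_{i+x}` with `0 < π_t < π_i` throughout. -/
def rightRun {n : ℕ} (π : Fin n → ℕ) (i : ℕ) : ℕ :=
  Nat.findGreatest
    (fun x => ∀ t ∈ Finset.Icc (i + 1) (i + x), 0 < at1 π t ∧ at1 π t < at1 π i) n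

/-- `Left(π_i)`: the length of the longest consecutive run
`π_{i-x}, …, π_{i-1}` with `0 < π_t < π_i` throughout. -/
noncomputable def leftRun {n : ℕ} (π : Fin n → ℕ) (i : ℕ) : ℕ :=
  @Nat.findGreatest
    (fun x => ∀ t ∈ Finset.Icc (i - x) (i - 1), 0 < at1 π t ∧ at1 π t < at1 π i)
    (fun _ => Classical.propDecidable _) n

/-- `B(π_i) = min(Right(π_i), k)`. -/
def Bval (k : ℕ) {n : ℕ} (π : Fin n → ℕ) (i : ℕ) : ℕ :=
  min (rightRun π i) k

/-- `F(π_i)`, defined by cases: `0` if `Left(π_i) = 0`; `min(i-1, l)` if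
`Left(π_i) = i-1 > 0`; and `max(min(Left(π_i) - k, l), 0)` (truncated
subtraction) if `0 < Left(π_i) < i-1`. -/
noncomputable def Fval (k l : ℕ) {n : ℕ} (π : Fin n → ℕ) (i : ℕ) : ℕ :=
  if leftRun π i = 0 then 0
  else if leftRun π i = i - 1 then min (i - 1) l
  else min (leftRun π i - k) l

/-- `L(σ_i)`: the length of the longest consecutive run of `σ` ending at
position `i` all of whose entries are at most `σ_i`. -/
noncomputable def Lrun {n : ℕ} (σ : Fin n → ℕ) (i : ℕ) : ℕ :=
  @Nat.findGreatest
    (fun x => ∀ t ∈ Finset.Icc (i - x + 1) i, at1 σ t ≤ at1 σ i)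
    (fun _ => Classical.propDecidable _) n
namespace PB

lemma find?_range_eq_some {p : ℕ → Bool} {k j : ℕ} :
    (List.range k).find? p = some j ↔ j < k ∧ p j ∧ ∀ j' < j, ¬ p j' := by
  induction k generalizing j with
  | zero => simp
  | succ k ih =>
    rw [List.range_succ, List.find?_append]
    rcases h : (List.range k).find? p with _ | j₀
    · have hall := List.find?_eq_none.mp h
      simp only [Option.none_or]
      constructor
      · intro hs
        simp only [List.find?_cons, List.find?_nil] at hs
        rcases hp : p k with _ | _ <;> simp [hp] at hs
        subst hs
        exact ⟨Nat.lt_succ_self _, hp, fun j' hj' => hall j' (List.mem_range.mpr hj')⟩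
      · rintro ⟨hjk, hpj, hmin⟩
        have : j = k := by
          rcases Nat.lt_or_ge j k with h' | h'
          · exact absurd hpj (hall j (List.mem_range.mpr h'))
          · omega
        subst this
        simp [List.find?_cons, hpj]
    · have := List.find?_eq_some_iff_append.mp h
      obtain ⟨hpj₀, as, bs, hsplit, hmin⟩ := this
      have hj₀ : j₀ < k ∧ p j₀ ∧ ∀ j' < j₀, ¬ p j' := ih.mp h
      have hor : (some j₀).or (List.find? p [k]) = some j₀ := rfl
      rw [hor]
      constructor
      · intro hs
        obtain rfl : j₀ = j := Option.some_inj.mp hs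
        exact ⟨Nat.lt_succ_of_lt hj₀.1, hj₀.2.1, hj₀.2.2⟩
      · rintro ⟨hjk, hpj, hmin'⟩
        congr 1
        rcases Nat.lt_trichotomy j j₀ with h' | h' | h'
        · exact absurd hpj (hj₀.2.2 j h')
        · exact h'.symm
        · exact absurd hj₀.2.1 (hmin' j₀ h')

lemma find?_range_eq_none {p : ℕ → Bool} {k : ℕ} :
    (List.range k).find? p = none ↔ ∀ j < k, ¬ p j := by
  rw [List.find?_eq_none]
  simp [List.mem_range]

lemma find?_range_map_eq_some {f : ℕ → ℕ} {p : ℕ → Bool} {k : ℕ} {s : ℕ} :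
    (((List.range k).map f).find? p = some s) ↔
      ∃ j < k, s = f j ∧ p (f j) ∧ ∀ j' < j, ¬ p (f j') := by
  rw [List.find?_map]
  constructor
  · intro h
    rcases Option.map_eq_some_iff.mp h with ⟨j, hj, rfl⟩
    have := find?_range_eq_some.mp hj
    exact ⟨j, this.1, rfl, this.2.1, this.2.2⟩
  · rintro ⟨j, hjk, rfl, hpj, hmin⟩
    rw [show List.find? (p ∘ f) (List.range k) = some j from
      find?_range_eq_some.mpr ⟨hjk, hpj, hmin⟩]
    rfl

lemma find?_range_map_eq_none {f : ℕ → ℕ} {p : ℕ → Bool} {k : ℕ} :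
    (((List.range k).map f).find? p = none) ↔ ∀ j < k, ¬ p (f j) := by
  rw [List.find?_map]
  rcases h : (List.range k).find? (p ∘ f) with _ | j
  · simpa using find?_range_eq_none.mp h
  · have := find?_range_eq_some.mp h
    simp only [Option.map_some, reduceCtorEq, false_iff, not_forall]
    exact ⟨j, this.1, by simpa using this.2.1⟩

lemma pullTry_eq_some_iff {k l n : ℕ} {occ : Finset ℕ} {a i : ℕ} :
    pullTry k l n occ a = some i ↔
      (a ∉ occ ∧ i = a) ∨
      (a ∈ occ ∧ i < a ∧ a ≤ i + k ∧ 1 ≤ i ∧ i ∉ occ ∧ ∀ t, i < t → t < a → t ∈ occ) ∨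
      (a ∈ occ ∧ a < i ∧ i ≤ a + l ∧ i ≤ n ∧ i ∉ occ ∧ (∀ t, a < t → t < i → t ∈ occ) ∧
        ∀ t, a ≤ t + k → t < a → 1 ≤ t → t ∈ occ) := by
  unfold pullTry
  by_cases ha : a ∈ occ
  · rw [if_neg (by simp [ha])]
    rcases hb : ((List.range k).map (fun j => a - (j + 1))).find?
        (fun s => decide (1 ≤ s ∧ s ∉ occ)) with _ | s
    · -- backward failed
      have hbf : ∀ t, a ≤ t + k → t < a → 1 ≤ t → t ∈ occ := by
        intro t htk hta ht1
        have := find?_range_map_eq_none.mp hb (a - t - 1) (by omega)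
        have he : a - (a - t - 1 + 1) = t := by omega
        rw [he] at this
        simp only [decide_eq_true_eq, not_and, not_not] at this
        exact this ht1
      constructor
      · intro h
        rcases find?_range_map_eq_some.mp h with ⟨j, hjl, rfl, hpi, hmin⟩
        simp only [decide_eq_true_eq] at hpi hmin
        refine Or.inr (Or.inr ⟨ha, by omega, by omega, hpi.1, hpi.2, ?_, hbf⟩)
        intro t hat hti
        have hj' : t - a - 1 < j := by omega
        have := hmin (t - a - 1) hj'
        have he : a + (t - a - 1 + 1) = t := by omega
        rw [he] at this
        by_contra htocc
        exact this ⟨by omega, htocc⟩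
      · rintro (⟨h, _⟩ | ⟨_, hia, hak, h1i, hiocc, hrun⟩ | ⟨_, hai, hil, hin, hiocc, hrun, _⟩)
        · exact absurd ha h
        · -- contradiction: backward should have found i
          exfalso
          have := find?_range_map_eq_none.mp hb (a - i - 1) (by omega)
          have he : a - (a - i - 1 + 1) = i := by omega
          rw [he] at this
          simp only [decide_eq_true_eq, not_and, not_not] at this
          exact hiocc (this h1i)
        · apply find?_range_map_eq_some.mpr
          refine ⟨i - a - 1, by omega, by omega, ?_, ?_⟩
          · have he : a + (i - a - 1 + 1) = i := by omega
            rw [he]; simp [hin, hiocc]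
          · intro j' hj'
            have he : a + (j' + 1) ∈ occ := hrun _ (by omega) (by omega)
            simp [he]
    · -- backward found s
      rcases find?_range_map_eq_some.mp hb with ⟨j, hjk, rfl, hps, hmin⟩
      simp only [decide_eq_true_eq] at hps hmin
      constructor
      · rintro hsome
        have hi : i = a - (j + 1) := by
          simpa using hsome.symm
        subst hi
        refine Or.inr (Or.inl ⟨ha, by omega, by omega, hps.1, hps.2, ?_⟩)
        intro t hit hta
        have hj' : a - t - 1 < j := by omega
        have := hmin (a - t - 1) hj'
        have he : a - (a - t - 1 + 1) = t := by omega
        rw [he] at this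
        by_contra htocc
        exact this ⟨by omega, htocc⟩
      · rintro (⟨h, _⟩ | ⟨_, hia, hak, h1i, hiocc, hrun⟩ | ⟨_, hai, hil, hin, hiocc, hrun, hbf⟩)
        · exact absurd ha h
        · have : a - (j + 1) = i := by
            rcases Nat.lt_trichotomy (a - (j+1)) i with h' | h' | h'
            · exfalso
              have hjm : a - i - 1 < j := by omega
              have := hmin (a - i - 1) hjm
              have he : a - (a - i - 1 + 1) = i := by omega
              rw [he] at this
              exact this ⟨h1i, hiocc⟩
            · exact h'
            · exfalso
              exact hps.2 (hrun _ h' (by omega))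
          simp [this]
        · exfalso
          exact hps.2 (hbf _ (by omega) (by omega) hps.1)
  · rw [if_pos ha]
    rw [Option.some_inj]
    constructor
    · intro h; exact Or.inl ⟨ha, h.symm⟩
    · rintro (⟨_, rfl⟩ | ⟨h, _⟩ | ⟨h, _⟩) <;> first | rfl | exact absurd h ha

end PB
namespace PB

lemma pullRunAux_eq_some_iff {k l n : ℕ} :
    ∀ (prefs : List ℕ) (occ : Finset ℕ) (S : List ℕ),
    pullRunAux k l n prefs occ = some S ↔
      S.length = prefs.length ∧
      ∀ j < prefs.length,
        pullTry k l n (occ ∪ (S.take j).toFinset) (prefs.getD j 0) = some (S.getD j 0) := by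
  intro prefs
  induction prefs with
  | nil =>
    intro occ S
    simp only [pullRunAux, List.length_nil, Nat.not_lt_zero, false_implies, implies_true,
      and_true, Option.some_inj]
    constructor
    · rintro rfl; rfl
    · intro h; exact (List.length_eq_zero_iff.mp h).symm
  | cons a rest ih =>
    intro occ S
    simp only [pullRunAux]
    rcases ht : pullTry k l n occ a with _ | s
    · simp only [reduceCtorEq, false_iff, not_and]
      intro hlen hall
      have := hall 0 (by simp)
      simp only [List.take_zero, List.toFinset_nil, Finset.union_empty, List.getD_cons_zero] at this
      rw [ht] at this
      exact absurd this (by simp)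
    · constructor
      · intro h
        rcases Option.map_eq_some_iff.mp h with ⟨T, hT, rfl⟩
        obtain ⟨hlen, hall⟩ := (ih (insert s occ) T).mp hT
        refine ⟨by simp [hlen], ?_⟩
        intro j hj
        match j with
        | 0 =>
          simpa [ht] using rfl
        | j + 1 =>
          have := hall j (by simpa using hj)
          simp only [List.take_succ_cons, List.toFinset_cons, List.getD_cons_succ]
          rw [show occ ∪ insert s (T.take j).toFinset = insert s occ ∪ (T.take j).toFinset by
            ext x; simp only [Finset.mem_union, Finset.mem_insert]; tauto]
          exact this
      · rintro ⟨hlen, hall⟩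
        have h0 := hall 0 (by simp)
        simp only [List.take_zero, List.toFinset_nil, Finset.union_empty,
          List.getD_cons_zero] at h0
        rw [ht] at h0
        have hS : ∃ T, S = s :: T := by
          match S, hlen with
          | s' :: T, _ =>
            have : s' = s := by simpa using h0.symm
            exact ⟨T, by rw [this]⟩
        obtain ⟨T, rfl⟩ := hS
        have : pullRunAux k l n rest (insert s occ) = some T := by
          apply (ih (insert s occ) T).mpr
          refine ⟨by simpa using hlen, ?_⟩
          intro j hj
          have := hall (j+1) (by simpa using hj)
          simp only [List.take_succ_cons, List.toFinset_cons, List.getD_cons_succ] at this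
          rw [show occ ∪ insert s (T.take j).toFinset = insert s occ ∪ (T.take j).toFinset by
            ext x; simp only [Finset.mem_union, Finset.mem_insert]; tauto] at this
          exact this
        simp [this]

lemma pullRun_eq_some_iff {k l n : ℕ} {prefs S : List ℕ} :
    pullRun k l n prefs = some S ↔
      S.length = prefs.length ∧
      ∀ j < prefs.length,
        pullTry k l n (S.take j).toFinset (prefs.getD j 0) = some (S.getD j 0) := by
  rw [pullRun, pullRunAux_eq_some_iff]
  simp

end PB
namespace PB

lemma at1_coe {n : ℕ} (π : Fin n → ℕ) (i : Fin n) : at1 π ((i : ℕ) + 1) = π i := by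
  have h : 1 ≤ (i : ℕ) + 1 ∧ (i : ℕ) + 1 ≤ n := ⟨Nat.le_add_left _ _, i.isLt⟩
  rw [at1, dif_pos h]
  congr 1

lemma at1_eq {n : ℕ} (π : Fin n → ℕ) (t : ℕ) (h1 : 1 ≤ t) (h2 : t ≤ n) :
    at1 π t = π ⟨t - 1, by omega⟩ := by
  rw [at1, dif_pos ⟨h1, h2⟩]

lemma at1_out {n : ℕ} (π : Fin n → ℕ) (t : ℕ) (h : ¬ (1 ≤ t ∧ t ≤ n)) :
    at1 π t = 0 := by
  rw [at1, dif_neg h]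

lemma mem_SmnSet_iff {m n : ℕ} {π : Fin n → ℕ} :
    π ∈ SmnSet m n ↔ (∀ i, π i ≤ m) ∧
      Finset.univ.val.map π =
        Multiset.replicate (n - m) 0 + (Multiset.range m).map (· + 1) := by
  rw [SmnSet, Finset.mem_filter, Finset.mem_image]
  constructor
  · rintro ⟨⟨π', _, rfl⟩, h2⟩
    exact ⟨fun i => Nat.lt_succ_iff.mp (π' i).isLt, h2⟩
  · rintro ⟨h1, h2⟩
    refine ⟨⟨fun i => ⟨π i, Nat.lt_succ_iff.mpr (h1 i)⟩, Finset.mem_univ _, rfl⟩, h2⟩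

lemma smn_count {m n : ℕ} {π : Fin n → ℕ} (hπ : π ∈ SmnSet m n) (c : ℕ) :
    (Finset.univ.filter (fun i : Fin n => π i = c)).card
      = if c = 0 then n - m else if c ≤ m then 1 else 0 := by
  have h2 := (mem_SmnSet_iff.mp hπ).2
  have hcount := congrArg (Multiset.count c) h2
  rw [Multiset.count_add, Multiset.count_replicate, Multiset.count_map] at hcount
  have hl : Multiset.card (Multiset.filter (fun a => c = π a) Finset.univ.val)
      = (Finset.univ.filter (fun i : Fin n => π i = c)).card := by
    rw [show (Finset.univ.filter (fun i : Fin n => π i = c))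
        = (Finset.univ.filter (fun i : Fin n => c = π i)) from by ext i; simp [eq_comm]]
    rfl
  rw [hl] at hcount
  have hc2 : Multiset.count c ((Multiset.range m).map (· + 1))
      = if 1 ≤ c ∧ c ≤ m then 1 else 0 := by
    by_cases h : 1 ≤ c ∧ c ≤ m
    · rw [if_pos h]
      have hmem : c ∈ (Multiset.range m).map (· + 1) := by
        simp only [Multiset.mem_map, Multiset.mem_range]
        exact ⟨c - 1, by omega, by omega⟩
      have hnodup : ((Multiset.range m).map (· + 1)).Nodup :=
        (Multiset.nodup_range m).map (fun a b => by omega)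
      exact Multiset.count_eq_one_of_mem hnodup hmem
    · rw [if_neg h, Multiset.count_eq_zero]
      simp only [Multiset.mem_map, Multiset.mem_range]
      rintro ⟨a, ha, rfl⟩
      omega
  rw [hc2] at hcount
  rw [hcount]
  by_cases hc : c = 0
  · subst hc; simp
  · rw [if_neg hc]
    split_ifs <;> omega

lemma smn_existsUnique {m n : ℕ} {π : Fin n → ℕ} (hπ : π ∈ SmnSet m n) {c : ℕ}
    (hc : 1 ≤ c) (hcm : c ≤ m) : ∃! i : Fin n, π i = c := by
  have := smn_count hπ c
  rw [if_neg (by omega), if_pos hcm] at this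
  obtain ⟨i, hi⟩ := Finset.card_eq_one.mp this
  refine ⟨i, ?_, ?_⟩
  · have : i ∈ Finset.univ.filter (fun j : Fin n => π j = c) := hi ▸ Finset.mem_singleton_self i
    exact (Finset.mem_filter.mp this).2
  · intro j hj
    have : j ∈ Finset.univ.filter (fun j : Fin n => π j = c) :=
      Finset.mem_filter.mpr ⟨Finset.mem_univ _, hj⟩
    rw [hi] at this
    exact Finset.mem_singleton.mp this

noncomputable def spot {n : ℕ} (π : Fin n → ℕ) (c : ℕ) : ℕ :=
  if h : ∃ i : Fin n, π i = c then ((Classical.choose h : Fin n) : ℕ) + 1 else 0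

lemma spot_spec {m n : ℕ} {π : Fin n → ℕ} (hπ : π ∈ SmnSet m n) {c : ℕ}
    (hc : 1 ≤ c) (hcm : c ≤ m) :
    1 ≤ spot π c ∧ spot π c ≤ n ∧ at1 π (spot π c) = c := by
  obtain ⟨i, hi, _⟩ := smn_existsUnique hπ hc hcm
  rw [spot, dif_pos ⟨i, hi⟩]
  set j := Classical.choose (⟨i, hi⟩ : ∃ i : Fin n, π i = c) with hj
  have hjs : π j = c := Classical.choose_spec (⟨i, hi⟩ : ∃ i : Fin n, π i = c)
  exact ⟨by omega, j.isLt, by rw [at1_coe]; exact hjs⟩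

lemma spot_unique {m n : ℕ} {π : Fin n → ℕ} (hπ : π ∈ SmnSet m n) {c t : ℕ}
    (hc : 1 ≤ c) (hcm : c ≤ m) (h1 : 1 ≤ t) (h2 : t ≤ n) (ht : at1 π t = c) :
    t = spot π c := by
  obtain ⟨i, hi, hiu⟩ := smn_existsUnique hπ hc hcm
  obtain ⟨hs1, hs2, hs3⟩ := spot_spec hπ hc hcm
  rw [at1_eq π t h1 h2] at ht
  rw [at1_eq π _ hs1 hs2] at hs3
  have e1 := hiu _ ht
  have e2 := hiu _ hs3
  have : (⟨t - 1, by omega⟩ : Fin n) = ⟨spot π c - 1, by omega⟩ := by rw [e1, e2]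
  have := Fin.mk.injEq .. ▸ this
  omega

end PB
namespace PB

section Runs
variable {n : ℕ} (π : Fin n → ℕ) (i : ℕ)

private abbrev RP (π : Fin n → ℕ) (i : ℕ) : ℕ → Prop :=
  fun x => ∀ t ∈ Finset.Icc (i + 1) (i + x), 0 < at1 π t ∧ at1 π t < at1 π i

private abbrev LP (π : Fin n → ℕ) (i : ℕ) : ℕ → Prop :=
  fun x => ∀ t ∈ Finset.Icc (i - x) (i - 1), 0 < at1 π t ∧ at1 π t < at1 π i

lemma rightRun_spec :
    ∀ t ∈ Finset.Icc (i+1) (i + rightRun π i), 0 < at1 π t ∧ at1 π t < at1 π i :=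
  @Nat.findGreatest_spec 0 (RP π i) _ n (Nat.zero_le n)
    (by intro t ht; rw [Finset.mem_Icc] at ht; omega)

lemma rightRun_ge (d : ℕ) (hd : d ≤ n)
    (h : ∀ t ∈ Finset.Icc (i+1) (i+d), 0 < at1 π t ∧ at1 π t < at1 π i) :
    d ≤ rightRun π i :=
  @Nat.le_findGreatest d (RP π i) _ n hd h

lemma rightRun_max :
    ¬(0 < at1 π (i + rightRun π i + 1) ∧ at1 π (i + rightRun π i + 1) < at1 π i) := by
  set R := rightRun π i with hR
  intro h
  by_cases hn : i + R + 1 ≤ n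
  · refine @Nat.findGreatest_is_greatest (R+1) (RP π i) _ n (lt_add_one R) (by omega) ?_
    intro t ht
    rw [Finset.mem_Icc] at ht
    by_cases htR : t ≤ i + R
    · exact rightRun_spec π i t (Finset.mem_Icc.mpr ⟨ht.1, htR⟩)
    · have : t = i + R + 1 := by omega
      rw [this]; exact h
  · rw [at1_out π _ (by omega)] at h
    exact absurd h.1 (lt_irrefl 0)

lemma rightRun_pos_le (hd : 0 < rightRun π i) : i + rightRun π i ≤ n := by
  have := rightRun_spec π i (i + rightRun π i) (Finset.mem_Icc.mpr ⟨by omega, le_refl _⟩)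
  by_contra hn
  rw [at1_out π _ (by omega)] at this
  exact absurd this.1 (lt_irrefl 0)

lemma leftRun_spec (hi : 1 ≤ i) :
    ∀ t ∈ Finset.Icc (i - leftRun π i) (i-1), 0 < at1 π t ∧ at1 π t < at1 π i :=
  @Nat.findGreatest_spec 0 (LP π i) (fun _ => Classical.propDecidable _) n (Nat.zero_le n)
    (by intro t ht; rw [Finset.mem_Icc] at ht; omega)

lemma leftRun_le_sub (hi : 1 ≤ i) : leftRun π i ≤ i - 1 := by
  by_contra h
  push_neg at h
  have h0 := leftRun_spec π i hi 0 (Finset.mem_Icc.mpr ⟨by omega, by omega⟩)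
  rw [at1_out π 0 (by omega)] at h0
  exact absurd h0.1 (lt_irrefl 0)

lemma leftRun_ge (d : ℕ) (hd : d ≤ n)
    (h : ∀ t ∈ Finset.Icc (i - d) (i-1), 0 < at1 π t ∧ at1 π t < at1 π i) :
    d ≤ leftRun π i :=
  @Nat.le_findGreatest d (LP π i) (fun _ => Classical.propDecidable _) n hd h

lemma leftRun_max (hi : 1 ≤ i) (hin : i ≤ n) (hlt : leftRun π i < i - 1) :
    ¬(0 < at1 π (i - leftRun π i - 1) ∧ at1 π (i - leftRun π i - 1) < at1 π i) := by
  set L := leftRun π i with hL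
  intro h
  refine @Nat.findGreatest_is_greatest (L+1) (LP π i) (fun _ => Classical.propDecidable _) n
    (lt_add_one L) (by omega) ?_
  intro t ht
  rw [Finset.mem_Icc] at ht
  by_cases htL : i - L ≤ t
  · exact leftRun_spec π i hi t (Finset.mem_Icc.mpr ⟨htL, ht.2⟩)
  · have : t = i - L - 1 := by omega
    rw [this]
    have he : i - (L + 1) = i - L - 1 := by omega
    exact he ▸ h

lemma rightRun_eq_zero (h : at1 π i = 0) : rightRun π i = 0 := by
  rw [rightRun]
  rw [Nat.findGreatest_eq_zero_iff]
  intro x hx hxn hall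
  have := hall (i+1) (Finset.mem_Icc.mpr ⟨le_refl _, by omega⟩)
  rw [h] at this
  omega

lemma leftRun_eq_zero (h : at1 π i = 0) : leftRun π i = 0 := by
  refine (@Nat.findGreatest_eq_zero_iff n (LP π i) (fun _ => Classical.propDecidable _)).mpr ?_
  intro x hx hxn hall
  have := hall (i-1) (Finset.mem_Icc.mpr ⟨by omega, le_refl _⟩)
  rw [h] at this
  omega

lemma Bval_vacant {k : ℕ} (h : at1 π i = 0) : Bval k π i = 0 := by
  rw [Bval, rightRun_eq_zero π i h]
  simp

lemma Fval_vacant {k l : ℕ} (h : at1 π i = 0) : Fval k l π i = 0 := by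
  rw [Fval, if_pos (leftRun_eq_zero π i h)]

end Runs
end PB
namespace PB

lemma mem_occBefore {n : ℕ} {π : Fin n → ℕ} {c t : ℕ} :
    t ∈ occBefore π c ↔ (1 ≤ t ∧ t ≤ n ∧ 0 < at1 π t ∧ at1 π t < c) := by
  rw [occBefore, Finset.mem_filter, Finset.mem_Icc]
  tauto

lemma Fval_le_sub {k l n : ℕ} (π : Fin n → ℕ) (i : ℕ) (hi1 : 1 ≤ i) :
    Fval k l π i ≤ i - 1 := by
  have hL := leftRun_le_sub π i hi1
  rw [Fval]
  split_ifs <;> omega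

lemma Fval_le_l {k l n : ℕ} (π : Fin n → ℕ) (i : ℕ) :
    Fval k l π i ≤ l := by
  rw [Fval]
  split_ifs <;> omega

lemma Bval_le_right {k n : ℕ} (π : Fin n → ℕ) (i : ℕ) : i + Bval k π i ≤ n ∨ Bval k π i = 0 := by
  rcases Nat.eq_zero_or_pos (rightRun π i) with h | h
  · right; rw [Bval, h]; simp
  · left
    have := rightRun_pos_le π i h
    have : Bval k π i ≤ rightRun π i := min_le_left _ _
    omega

lemma pullTry_occBefore_iff {k l m n : ℕ} {π : Fin n → ℕ} (hπ : π ∈ SmnSet m n)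
    {i : ℕ} (hi1 : 1 ≤ i) (hin : i ≤ n) (hc : 0 < at1 π i)
    {a : ℕ} (ha1 : 1 ≤ a) (han : a ≤ n) :
    pullTry k l n (occBefore π (at1 π i)) a = some i ↔
      i - Fval k l π i ≤ a ∧ a ≤ i + Bval k π i := by
  set c := at1 π i with hcdef
  set R := rightRun π i with hRdef
  set L := leftRun π i with hLdef
  have hiocc : i ∉ occBefore π c := by
    rw [mem_occBefore]
    push_neg
    intro _ _ _
    omega
  have hL1 : L ≤ i - 1 := leftRun_le_sub π i hi1
  have hFl : Fval k l π i ≤ l := Fval_le_l π i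
  have hFi : Fval k l π i ≤ i - 1 := Fval_le_sub π i hi1
  have hFL : Fval k l π i ≤ L := by
    rw [Fval]
    split_ifs <;> omega
  have hBn : i + Bval k π i ≤ n := by
    rcases Bval_le_right (k := k) π i with h | h
    · exact h
    · omega
  constructor
  · intro h
    rw [pullTry_eq_some_iff] at h
    rcases h with ⟨_, rfl⟩ | ⟨haocc, hia, hak, _, _, hrun⟩ | ⟨haocc, hai, hal, _, _, hrun, hbf⟩
    · omega
    · -- a is to the right of i
      have hdR : a - i ≤ R := by
        apply rightRun_ge π i (a - i) (by omega)
        intro t ht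
        rw [Finset.mem_Icc] at ht
        by_cases hta : t < a
        · have := hrun t (by omega) hta
          rw [mem_occBefore] at this
          exact ⟨this.2.2.1, this.2.2.2⟩
        · have : t = a := by omega
          subst this
          rw [mem_occBefore] at haocc
          exact ⟨haocc.2.2.1, haocc.2.2.2⟩
      have : a ≤ i + Bval k π i := by
        rw [Bval, ← hRdef]
        omega
      omega
    · -- a is to the left of i
      set d := i - a with hddef
      have hdL : d ≤ L := by
        apply leftRun_ge π i d (by omega)
        intro t ht
        rw [Finset.mem_Icc] at ht
        by_cases hta : a < t
        · have := hrun t hta (by omega)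
          rw [mem_occBefore] at this
          exact ⟨this.2.2.1, this.2.2.2⟩
        · have : t = a := by omega
          subst this
          rw [mem_occBefore] at haocc
          exact ⟨haocc.2.2.1, haocc.2.2.2⟩
      have hLne : L ≠ 0 := by omega
      by_cases hLi : L = i - 1
      · have : Fval k l π i = min (i-1) l := by
          rw [Fval, if_neg (by rw [← hLdef]; exact hLne), if_pos (by rw [← hLdef]; exact hLi)]
        omega
      · -- 0 < L < i - 1
        have hdkL : d + k ≤ L := by
          by_cases hak : k < a
          · have : d + k ≤ L := by
              apply leftRun_ge π i (d + k) (by omega)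
              intro t ht
              rw [Finset.mem_Icc] at ht
              by_cases hta : a ≤ t
              · by_cases hta2 : a < t
                · have := hrun t hta2 (by omega)
                  rw [mem_occBefore] at this
                  exact ⟨this.2.2.1, this.2.2.2⟩
                · have : t = a := by omega
                  subst this
                  rw [mem_occBefore] at haocc
                  exact ⟨haocc.2.2.1, haocc.2.2.2⟩
              · have := hbf t (by omega) (by omega) (by omega)
                rw [mem_occBefore] at this
                exact ⟨this.2.2.1, this.2.2.2⟩
            exact this
          · exfalso
            apply hLi
            have : i - 1 ≤ L := by
              apply leftRun_ge π i (i-1) (by omega)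
              intro t ht
              rw [Finset.mem_Icc] at ht
              by_cases hta : a ≤ t
              · by_cases hta2 : a < t
                · have := hrun t hta2 (by omega)
                  rw [mem_occBefore] at this
                  exact ⟨this.2.2.1, this.2.2.2⟩
                · have : t = a := by omega
                  subst this
                  rw [mem_occBefore] at haocc
                  exact ⟨haocc.2.2.1, haocc.2.2.2⟩
              · have := hbf t (by omega) (by omega) (by omega)
                rw [mem_occBefore] at this
                exact ⟨this.2.2.1, this.2.2.2⟩
            omega
        have : Fval k l π i = min (L - k) l := by
          rw [Fval, if_neg (by rw [← hLdef]; exact hLne), if_neg (by rw [← hLdef]; exact hLi),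
            ← hLdef]
        omega
  · rintro ⟨h1, h2⟩
    rw [pullTry_eq_some_iff]
    rcases Nat.lt_trichotomy a i with hai | hai | hai
    · -- left case
      set d := i - a with hddef
      have hd1 : 1 ≤ d := by omega
      have hdF : d ≤ Fval k l π i := by omega
      have hdL : d ≤ L := by omega
      have hrunmem : ∀ t, i - L ≤ t → t ≤ i - 1 → t ∈ occBefore π c := by
        intro t ht1 ht2
        have := leftRun_spec π i hi1 t (Finset.mem_Icc.mpr ⟨by rw [← hLdef]; omega, ht2⟩)
        rw [mem_occBefore]
        exact ⟨by omega, by omega, this.1, this.2⟩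
      have haocc : a ∈ occBefore π c := hrunmem a (by omega) (by omega)
      refine Or.inr (Or.inr ⟨haocc, hai, by omega, hin, hiocc, ?_, ?_⟩)
      · intro t hta hti
        exact hrunmem t (by omega) (by omega)
      · intro t htk hta ht1
        by_cases hLi : L = i - 1
        · exact hrunmem t (by omega) (by omega)
        · have hLne : L ≠ 0 := by
            intro h0
            rw [Fval, if_pos (by rw [← hLdef]; exact h0)] at hdF
            omega
          have hFeq : Fval k l π i = min (L - k) l := by
            rw [Fval, if_neg (by rw [← hLdef]; exact hLne), if_neg (by rw [← hLdef]; exact hLi),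
              ← hLdef]
          exact hrunmem t (by omega) (by omega)
    · -- a = i
      subst hai
      exact Or.inl ⟨hiocc, rfl⟩
    · -- right case
      set d := a - i with hddef
      have hd1 : 1 ≤ d := by omega
      have hdB : d ≤ Bval k π i := by omega
      have hdR : d ≤ R := by
        have : Bval k π i ≤ R := min_le_left _ _
        omega
      have hdk : d ≤ k := by
        have : Bval k π i ≤ k := min_le_right _ _
        omega
      have hrunmem : ∀ t, i + 1 ≤ t → t ≤ i + R → t ∈ occBefore π c := by
        intro t ht1 ht2
        have := rightRun_spec π i t (Finset.mem_Icc.mpr ⟨ht1, ht2⟩)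
        rw [mem_occBefore]
        refine ⟨by omega, ?_, this.1, this.2⟩
        by_contra hn
        rw [at1_out π t (by omega)] at this
        exact absurd this.1 (lt_irrefl 0)
      have haocc : a ∈ occBefore π c := hrunmem a (by omega) (by omega)
      refine Or.inr (Or.inl ⟨haocc, hai, by omega, hi1, hiocc, ?_⟩)
      intro t hti hta
      exact hrunmem t (by omega) (by omega)

lemma card_pref {k l m n : ℕ} {π : Fin n → ℕ} (hπ : π ∈ SmnSet m n)
    {i : ℕ} (hi1 : 1 ≤ i) (hin : i ≤ n) (hc : 0 < at1 π i) :
    (Finset.univ.filter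
        (fun a : Fin n => pullTry k l n (occBefore π (at1 π i)) ((a:ℕ)+1) = some i)).card
      = Bval k π i + Fval k l π i + 1 := by
  have hFi : Fval k l π i ≤ i - 1 := Fval_le_sub π i hi1
  have hBn : i + Bval k π i ≤ n := by
    rcases Bval_le_right (k := k) π i with h | h
    · exact h
    · omega
  have key : ∀ a : Fin n,
      (pullTry k l n (occBefore π (at1 π i)) ((a:ℕ)+1) = some i ↔
        i - Fval k l π i ≤ (a:ℕ)+1 ∧ (a:ℕ)+1 ≤ i + Bval k π i) := by
    intro a
    exact pullTry_occBefore_iff hπ hi1 hin hc (by omega) (by have := a.isLt; omega)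
  have hcard : (Finset.univ.filter
        (fun a : Fin n => pullTry k l n (occBefore π (at1 π i)) ((a:ℕ)+1) = some i)).card
      = (Finset.Icc (i - Fval k l π i) (i + Bval k π i)).card := by
    apply Finset.card_nbij (fun a : Fin n => (a:ℕ)+1)
    · intro a ha
      rw [Finset.mem_coe, Finset.mem_filter] at ha
      rw [Finset.mem_coe, Finset.mem_Icc]
      exact (key a).mp ha.2
    · intro x _ y _ hxy
      simp only at hxy
      exact Fin.ext (by omega)
    · intro b hb
      simp only [Finset.coe_Icc, Set.mem_Icc] at hb
      have hb1 : 1 ≤ b := by omega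
      have hbn : b ≤ n := by omega
      refine ⟨⟨b - 1, by omega⟩, ?_, by simp; omega⟩
      rw [Finset.mem_coe, Finset.mem_filter]
      refine ⟨Finset.mem_univ _, ?_⟩
      rw [key]
      simp only
      omega
  rw [hcard, Nat.card_Icc]
  omega

end PB
namespace PB

noncomputable def spotsList (m : ℕ) {n : ℕ} (π : Fin n → ℕ) : List ℕ :=
  List.ofFn (fun j : Fin m => spot π ((j:ℕ)+1))

@[simp] lemma spotsList_length {m n : ℕ} (π : Fin n → ℕ) : (spotsList m π).length = m := by
  rw [spotsList, List.length_ofFn]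

lemma spotsList_getElem {m n : ℕ} (π : Fin n → ℕ) {j : ℕ} (hj : j < m) :
    (spotsList m π)[j]'(by simp [hj]) = spot π (j+1) := by
  simp only [spotsList, List.getElem_ofFn]

lemma spotsList_getD {m n : ℕ} (π : Fin n → ℕ) {j : ℕ} (hj : j < m) :
    (spotsList m π).getD j 0 = spot π (j+1) := by
  rw [List.getD_eq_getElem _ _ (by simp [hj]), spotsList_getElem π hj]

lemma prefList_getD {m n : ℕ} (α : Fin m → Fin n) {j : ℕ} (hj : j < m) :
    (prefList α).getD j 0 = (α ⟨j, hj⟩ : ℕ) + 1 := by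
  rw [prefList, List.getD_eq_getElem _ _ (by simp [hj]), List.getElem_ofFn]

@[simp] lemma prefList_length {m n : ℕ} (α : Fin m → Fin n) : (prefList α).length = m := by
  rw [prefList, List.length_ofFn]

lemma occBefore_eq_take {m n : ℕ} {π : Fin n → ℕ} (hπ : π ∈ SmnSet m n)
    {j : ℕ} (hj : j ≤ m) :
    ((spotsList m π).take j).toFinset = occBefore π (j+1) := by
  ext t
  rw [List.mem_toFinset, List.mem_take_iff_getElem, mem_occBefore]
  constructor
  · rintro ⟨j', hj', rfl⟩
    simp only [spotsList_length] at hj'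
    have hj'm : j' < m := by omega
    rw [spotsList_getElem π hj'm]
    obtain ⟨h1, h2, h3⟩ := spot_spec hπ (c := j'+1) (by omega) (by omega)
    exact ⟨h1, h2, by omega, by omega⟩
  · rintro ⟨h1, h2, h3, h4⟩
    set d := at1 π t with hd
    have hdm : d ≤ m := by omega
    refine ⟨d - 1, ?_, ?_⟩
    · simp only [spotsList_length]
      omega
    · rw [spotsList_getElem π (show d - 1 < m by omega)]
      have : d - 1 + 1 = d := by omega
      rw [this]
      exact (spot_unique hπ (by omega) hdm h1 h2 rfl).symm

lemma pullTry_some_props {k l n : ℕ} {occ : Finset ℕ} {a s : ℕ}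
    (h : pullTry k l n occ a = some s) (ha1 : 1 ≤ a) (han : a ≤ n) :
    1 ≤ s ∧ s ≤ n ∧ s ∉ occ := by
  rw [pullTry_eq_some_iff] at h
  rcases h with ⟨h1, rfl⟩ | ⟨_, h2, _, h4, h5, _⟩ | ⟨_, h2, _, h4, h5, _⟩
  · exact ⟨ha1, han, h1⟩
  · exact ⟨h4, by omega, h5⟩
  · exact ⟨by omega, h4, h5⟩

/-- Structural facts about a successful `pullRun` on preferences in `[1,n]`. -/
lemma pullRun_props {k l m n : ℕ} {α : Fin m → Fin n} {S : List ℕ}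
    (h : pullRun k l n (prefList α) = some S) :
    S.length = m ∧ (∀ j (hj : j < m), 1 ≤ S.getD j 0 ∧ S.getD j 0 ≤ n) ∧
      (∀ j j' (hj : j < m) (hj' : j' < j), S.getD j 0 ≠ S.getD j' 0) := by
  obtain ⟨hlen, hall⟩ := pullRun_eq_some_iff.mp h
  rw [prefList_length] at hlen hall
  have hbounds : ∀ j (hj : j < m), 1 ≤ S.getD j 0 ∧ S.getD j 0 ≤ n ∧
      S.getD j 0 ∉ (S.take j).toFinset := by
    intro j hj
    have := hall j hj
    rw [prefList_getD α hj] at this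
    have := pullTry_some_props this (by omega) (by have := (α ⟨j, hj⟩).isLt; omega)
    exact this
  refine ⟨hlen, fun j hj => ⟨(hbounds j hj).1, (hbounds j hj).2.1⟩, ?_⟩
  intro j j' hj hj'
  have hmem : S.getD j' 0 ∈ (S.take j).toFinset := by
    rw [List.mem_toFinset, List.mem_take_iff_getElem]
    refine ⟨j', by simp; omega, ?_⟩
    rw [List.getD_eq_getElem _ _ (by omega)]
  intro heq
  exact (hbounds j hj).2.2 (heq ▸ hmem)

end PB
namespace PB

lemma smn_le {m n : ℕ} {π : Fin n → ℕ} (hπ : π ∈ SmnSet m n) (i : Fin n) : π i ≤ m :=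
  (mem_SmnSet_iff.mp hπ).1 i

lemma outcomeOf_getD {S : List ℕ}
    (hdist : ∀ j j' (_ : j < S.length) (_ : j' < j), S.getD j 0 ≠ S.getD j' 0)
    {j : ℕ} (hj : j < S.length) : outcomeOf S (S.getD j 0) = j + 1 := by
  rw [outcomeOf]
  have : S.findIdx? (· == S.getD j 0) = some j := by
    rw [List.findIdx?_eq_some_iff_getElem]
    refine ⟨hj, ?_, ?_⟩
    · rw [List.getD_eq_getElem _ _ hj]
      simp
    · intro j' hj'
      simp only [beq_iff_eq, Bool.not_eq_true, beq_eq_false_iff_ne, ne_eq]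
      rw [← List.getD_eq_getElem _ 0 (by omega)]
      exact fun heq => hdist j j' hj hj' heq.symm
  rw [this]

lemma outcomeOf_not_mem {S : List ℕ} {t : ℕ} (h : t ∉ S) : outcomeOf S t = 0 := by
  rw [outcomeOf]
  have : S.findIdx? (· == t) = none := by
    rw [List.findIdx?_eq_none_iff]
    intro x hx
    simp only [beq_eq_false_iff_ne, ne_eq]
    rintro rfl
    exact h hx
  rw [this]

lemma mem_spotsList_iff {m n : ℕ} (π : Fin n → ℕ) {x : ℕ} :
    x ∈ spotsList m π ↔ ∃ j : Fin m, spot π ((j:ℕ)+1) = x := by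
  rw [spotsList, List.mem_ofFn]

lemma mem_fiber_iff {k l m n : ℕ} (h1 : 1 ≤ m) (hm : m ≤ n) {π : Fin n → ℕ}
    (hπ : π ∈ SmnSet m n) (α : Fin m → Fin n) :
    (α ∈ pullPFs k l m n ∧ pullOutcome k l n α = π) ↔
      pullRun k l n (prefList α) = some (spotsList m π) := by
  constructor
  · rintro ⟨hmem, hout⟩
    rw [pullPFs, Finset.mem_filter] at hmem
    obtain ⟨S, hS⟩ := Option.isSome_iff_exists.mp hmem.2
    obtain ⟨hlen, hbounds, hdist⟩ := pullRun_props hS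
    have hSspots : S = spotsList m π := by
      apply List.ext_getElem (by simp [hlen])
      intro j hjS hjm
      rw [hlen] at hjS
      rw [spotsList_getElem π hjS]
      set s := S.getD j 0 with hs
      have hsget : S[j]'(by omega) = s := by rw [hs, List.getD_eq_getElem _ _ (by omega)]
      obtain ⟨hs1, hs2⟩ := hbounds j hjS
      have houts : outcomeOf S s = j + 1 := by
        apply outcomeOf_getD _ (by omega)
        intro a b ha hb
        exact hdist a b (by omega) hb
      have hsat : at1 π s = j + 1 := by
        have : π ⟨s - 1, by omega⟩ = j + 1 := by
          have := congrFun hout ⟨s - 1, by omega⟩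
          rw [pullOutcome] at this
          rw [← this]
          simp only
          rw [hS]
          have he : s - 1 + 1 = s := by omega
          rw [Option.getD_some, he, houts]
        rw [at1_eq π s hs1 hs2, this]
      rw [hsget]
      exact spot_unique hπ (by omega) (by omega) hs1 hs2 hsat
    rw [← hSspots]
    exact hS
  · intro hrun
    have hmem : α ∈ pullPFs k l m n := by
      rw [pullPFs, Finset.mem_filter]
      exact ⟨Finset.mem_univ _, by rw [hrun]; rfl⟩
    refine ⟨hmem, ?_⟩
    funext i
    rw [pullOutcome, hrun, Option.getD_some]
    set t := (i : ℕ) + 1 with ht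
    have hat : at1 π t = π i := at1_coe π i
    by_cases hc : π i = 0
    · rw [hc]
      apply outcomeOf_not_mem
      rw [mem_spotsList_iff]
      rintro ⟨j, hj⟩
      have := (spot_spec hπ (c := (j:ℕ)+1) (by omega) (by have := j.isLt; omega)).2.2
      rw [hj, hat, hc] at this
      omega
    · set c := π i with hcdef
      have hcm : c ≤ m := smn_le hπ i
      have hc1 : 1 ≤ c := by omega
      have htspot : t = spot π c := by
        apply spot_unique hπ hc1 hcm (by omega) (by have := i.isLt; omega)
        rw [hat]
      have : (spotsList m π).findIdx? (· == t) = some (c - 1) := by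
        rw [List.findIdx?_eq_some_iff_getElem]
        refine ⟨by simp; omega, ?_, ?_⟩
        · rw [spotsList_getElem π (show c - 1 < m by omega)]
          simp only [beq_iff_eq]
          rw [htspot]
          congr 1
          omega
        · intro j' hj'
          have hj'm : j' < m := by omega
          rw [spotsList_getElem π hj'm]
          simp only [beq_iff_eq]
          intro heq
          have := (spot_spec hπ (c := j'+1) (by omega) (by omega)).2.2
          rw [heq, hat] at this
          omega
      rw [outcomeOf, this]
      show c - 1 + 1 = c
      omega

lemma fiber_eq {k l m n : ℕ} (h1 : 1 ≤ m) (hm : m ≤ n) {π : Fin n → ℕ}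
    (hπ : π ∈ SmnSet m n) :
    Finset.filter (fun α => pullOutcome k l n α = π) (pullPFs k l m n)
      = Fintype.piFinset (fun j : Fin m =>
          Finset.univ.filter (fun a : Fin n =>
            pullTry k l n (occBefore π ((j:ℕ)+1)) ((a:ℕ)+1) = some (spot π ((j:ℕ)+1)))) := by
  ext α
  rw [Finset.mem_filter, Fintype.mem_piFinset]
  rw [show (α ∈ pullPFs k l m n ∧ pullOutcome k l n α = π) ↔
      pullRun k l n (prefList α) = some (spotsList m π) from mem_fiber_iff h1 hm hπ α]
  rw [pullRun_eq_some_iff]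
  simp only [spotsList_length, prefList_length]
  constructor
  · rintro ⟨_, hall⟩ j
    have hj := j.isLt
    have := hall (j : ℕ) hj
    rw [prefList_getD α hj, spotsList_getD π hj,
      occBefore_eq_take hπ (le_of_lt hj)] at this
    rw [Finset.mem_filter]
    refine ⟨Finset.mem_univ _, ?_⟩
    have : α ⟨(j:ℕ), hj⟩ = α j := by congr
    simp only [← this]
    have := hall (j : ℕ) hj
    rw [prefList_getD α hj, spotsList_getD π hj,
      occBefore_eq_take hπ (le_of_lt hj)] at this
    exact this
  · intro hall
    refine ⟨trivial, ?_⟩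
    intro j hj
    have := hall ⟨j, hj⟩
    rw [Finset.mem_filter] at this
    rw [prefList_getD α hj, spotsList_getD π hj, occBefore_eq_take hπ (le_of_lt hj)]
    exact this.2

lemma card_fiber {k l m n : ℕ} (h1 : 1 ≤ m) (hm : m ≤ n) {π : Fin n → ℕ}
    (hπ : π ∈ SmnSet m n) :
    (Finset.filter (fun α => pullOutcome k l n α = π) (pullPFs k l m n)).card
      = ∏ i ∈ Finset.Icc 1 n, (Bval k π i + Fval k l π i + 1) := by
  rw [fiber_eq h1 hm hπ, Fintype.card_piFinset]
  have hterm : ∀ j : Fin m,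
      (Finset.univ.filter (fun a : Fin n =>
        pullTry k l n (occBefore π ((j:ℕ)+1)) ((a:ℕ)+1) = some (spot π ((j:ℕ)+1)))).card
      = Bval k π (spot π ((j:ℕ)+1)) + Fval k l π (spot π ((j:ℕ)+1)) + 1 := by
    intro j
    obtain ⟨hs1, hs2, hs3⟩ := spot_spec hπ (c := (j:ℕ)+1) (by omega) (by have := j.isLt; omega)
    have := card_pref (k := k) (l := l) hπ hs1 hs2 (by omega)
    rw [hs3] at this
    exact this
  rw [Finset.prod_congr rfl (fun j _ => hterm j)]
  -- now reindex
  have hstep1 : ∏ i ∈ Finset.Icc 1 n, (Bval k π i + Fval k l π i + 1)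
      = ∏ i ∈ (Finset.Icc 1 n).filter (fun i => 0 < at1 π i),
          (Bval k π i + Fval k l π i + 1) := by
    symm
    apply Finset.prod_subset (Finset.filter_subset _ _)
    intro i hi hni
    rw [Finset.mem_filter, not_and] at hni
    have h0 : at1 π i = 0 := by
      by_contra h
      exact hni hi (by omega)
    rw [Bval_vacant π i h0, Fval_vacant π i h0]
    rfl

  rw [hstep1]
  apply Finset.prod_nbij (fun j : Fin m => spot π ((j:ℕ)+1))
  · intro j _
    obtain ⟨hs1, hs2, hs3⟩ := spot_spec hπ (c := (j:ℕ)+1) (by omega) (by have := j.isLt; omega)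
    rw [Finset.mem_filter, Finset.mem_Icc]
    exact ⟨⟨hs1, hs2⟩, by omega⟩
  · intro x _ y _ hxy
    simp only at hxy
    obtain ⟨_, _, hx3⟩ := spot_spec hπ (c := (x:ℕ)+1) (by omega) (by have := x.isLt; omega)
    obtain ⟨_, _, hy3⟩ := spot_spec hπ (c := (y:ℕ)+1) (by omega) (by have := y.isLt; omega)
    rw [hxy, hy3] at hx3
    exact Fin.ext (by omega)
  · intro i hi
    rw [Finset.mem_coe, Finset.mem_filter, Finset.mem_Icc] at hi
    obtain ⟨⟨hi1, hi2⟩, hi3⟩ := hi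
    set d := at1 π i with hd
    have hdm : d ≤ m := by
      rw [hd, at1_eq π i hi1 hi2]
      exact smn_le hπ _
    refine ⟨⟨d - 1, by omega⟩, by simp, ?_⟩
    simp only
    have he : d - 1 + 1 = d := by omega
    rw [he]
    exact (spot_unique hπ (by omega) hdm hi1 hi2 rfl).symm
  · intro j _
    rfl

end PB
namespace PB

lemma count_target (m n c : ℕ) :
    Multiset.count c (Multiset.replicate (n - m) 0 + (Multiset.range m).map (· + 1))
      = if c = 0 then n - m else if c ≤ m then 1 else 0 := by
  rw [Multiset.count_add, Multiset.count_replicate]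
  have hc2 : Multiset.count c ((Multiset.range m).map (· + 1))
      = if 1 ≤ c ∧ c ≤ m then 1 else 0 := by
    by_cases h : 1 ≤ c ∧ c ≤ m
    · rw [if_pos h]
      have hmem : c ∈ (Multiset.range m).map (· + 1) := by
        simp only [Multiset.mem_map, Multiset.mem_range]
        exact ⟨c - 1, by omega, by omega⟩
      have hnodup : ((Multiset.range m).map (· + 1)).Nodup :=
        (Multiset.nodup_range m).map (fun a b => by omega)
      exact Multiset.count_eq_one_of_mem hnodup hmem
    · rw [if_neg h, Multiset.count_eq_zero]
      simp only [Multiset.mem_map, Multiset.mem_range]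
      rintro ⟨a, ha, rfl⟩
      omega
  rw [hc2]
  by_cases hc : c = 0
  · subst hc; simp
  · rw [if_neg hc]
    split_ifs <;> omega

lemma count_map_univ {n : ℕ} (π : Fin n → ℕ) (c : ℕ) :
    Multiset.count c (Finset.univ.val.map π)
      = (Finset.univ.filter (fun i : Fin n => π i = c)).card := by
  rw [Multiset.count_map]
  rw [show (Finset.univ.filter (fun i : Fin n => π i = c))
      = (Finset.univ.filter (fun i : Fin n => c = π i)) from by ext i; simp [eq_comm]]
  rfl

lemma outcomeOf_le (S : List ℕ) (t : ℕ) : outcomeOf S t ≤ S.length := by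
  rw [outcomeOf]
  rcases h : S.findIdx? (· == t) with _ | j
  · exact Nat.zero_le _
  · obtain ⟨hj, _, _⟩ := List.findIdx?_eq_some_iff_getElem.mp h
    show j + 1 ≤ S.length
    omega

lemma outcomeOf_eq_pos_iff {S : List ℕ}
    (hdist : ∀ j j' (_ : j < S.length) (_ : j' < j), S.getD j 0 ≠ S.getD j' 0)
    {t c : ℕ} (hc : 1 ≤ c) :
    outcomeOf S t = c ↔ (c - 1 < S.length ∧ S.getD (c-1) 0 = t) := by
  rw [outcomeOf]
  rcases h : S.findIdx? (· == t) with _ | j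
  · simp only
    constructor
    · intro h0; omega
    · rintro ⟨hlen, hget⟩
      exfalso
      have := List.findIdx?_eq_none_iff.mp h (S.getD (c-1) 0)
        (by rw [List.getD_eq_getElem _ _ hlen]; exact List.getElem_mem _)
      rw [hget] at this
      simp at this
  · obtain ⟨hj, hpj, hmin⟩ := List.findIdx?_eq_some_iff_getElem.mp h
    simp only [beq_iff_eq] at hpj
    simp only
    constructor
    · intro hjc
      refine ⟨by omega, ?_⟩
      rw [show c - 1 = j by omega, List.getD_eq_getElem _ _ hj, hpj]
    · rintro ⟨hlen, hget⟩
      rcases Nat.lt_trichotomy j (c-1) with h' | h' | h'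
      · exfalso
        have := hdist (c-1) j hlen h'
        rw [hget, List.getD_eq_getElem _ _ hj, hpj] at this
        exact this rfl
      · omega
      · exfalso
        have := hmin (c-1) h'
        rw [← List.getD_eq_getElem _ 0 (by omega), hget] at this
        simp at this

lemma outcome_mem {k l m n : ℕ} (h1 : 1 ≤ m) (hm : m ≤ n) {α : Fin m → Fin n}
    (hα : α ∈ pullPFs k l m n) : pullOutcome k l n α ∈ SmnSet m n := by
  rw [pullPFs, Finset.mem_filter] at hα
  obtain ⟨S, hS⟩ := Option.isSome_iff_exists.mp hα.2
  obtain ⟨hlen, hbounds, hdist⟩ := pullRun_props hS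
  set π := pullOutcome k l n α with hπdef
  have hout : ∀ i : Fin n, π i = outcomeOf S ((i:ℕ)+1) := by
    intro i
    rw [hπdef, pullOutcome, hS, Option.getD_some]
  have hdist' : ∀ j j' (_ : j < S.length) (_ : j' < j), S.getD j 0 ≠ S.getD j' 0 := by
    intro j j' hj hj'
    exact hdist j j' (by omega) hj'
  have hle : ∀ i, π i ≤ m := by
    intro i
    rw [hout i]
    have := outcomeOf_le S ((i:ℕ)+1)
    omega
  rw [mem_SmnSet_iff]
  refine ⟨hle, ?_⟩
  apply Multiset.ext.mpr
  intro c
  rw [count_target, count_map_univ]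
  by_cases hc0 : c = 0
  · subst hc0
    rw [if_pos rfl]
    have hneg : (Finset.univ.filter (fun i : Fin n => ¬ π i = 0)).card = m := by
      symm
      have : (m : ℕ) = (Finset.univ : Finset (Fin m)).card := by simp
      rw [this]
      apply Finset.card_nbij (fun j : Fin m =>
        (⟨S.getD (j:ℕ) 0 - 1, by have := hbounds (j:ℕ) j.isLt; omega⟩ : Fin n))
      · intro j _
        rw [Finset.mem_coe, Finset.mem_filter]
        refine ⟨Finset.mem_univ _, ?_⟩
        rw [hout]
        simp only
        have hb := hbounds (j:ℕ) j.isLt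
        have he : S.getD (j:ℕ) 0 - 1 + 1 = S.getD (j:ℕ) 0 := by omega
        rw [he, outcomeOf_getD hdist' (by omega)]
        omega
      · intro x _ y _ hxy
        simp only [Fin.mk.injEq] at hxy
        have hbx := hbounds (x:ℕ) x.isLt
        have hby := hbounds (y:ℕ) y.isLt
        have hxy' : S.getD (x:ℕ) 0 = S.getD (y:ℕ) 0 := by omega
        by_contra hne
        rcases Nat.lt_trichotomy (x:ℕ) (y:ℕ) with h' | h' | h'
        · exact hdist' (y:ℕ) (x:ℕ) (by omega) h' hxy'.symm
        · exact hne (Fin.ext h')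
        · exact hdist' (x:ℕ) (y:ℕ) (by omega) h' hxy'
      · intro i hi
        rw [Finset.mem_coe, Finset.mem_filter] at hi
        have hc : 1 ≤ π i := by omega
        have hcm := hle i
        have := (outcomeOf_eq_pos_iff hdist' hc).mp (hout i).symm
        obtain ⟨hlt, hget⟩ := this
        refine ⟨⟨π i - 1, by omega⟩, by simp, ?_⟩
        simp only
        apply Fin.ext
        simp only
        rw [hget]
        simp
    have := Finset.card_filter_add_card_filter_not
      (s := (Finset.univ : Finset (Fin n))) (p := fun i => π i = 0)
    rw [hneg] at this
    simp only [Finset.card_univ, Fintype.card_fin] at this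
    omega
  · rw [if_neg hc0]
    by_cases hcm : c ≤ m
    · rw [if_pos hcm]
      have hb := hbounds (c-1) (by omega)
      rw [Finset.card_eq_one]
      refine ⟨⟨S.getD (c-1) 0 - 1, by omega⟩, ?_⟩
      ext i
      rw [Finset.mem_filter, Finset.mem_singleton]
      constructor
      · rintro ⟨_, hi⟩
        rw [hout i] at hi
        obtain ⟨_, hget⟩ := (outcomeOf_eq_pos_iff hdist' (by omega)).mp hi
        apply Fin.ext
        simp only
        omega
      · rintro rfl
        refine ⟨Finset.mem_univ _, ?_⟩
        rw [hout]
        apply (outcomeOf_eq_pos_iff hdist' (by omega)).mpr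
        refine ⟨by omega, ?_⟩
        simp only
        omega
    · rw [if_neg hcm]
      rw [Finset.card_eq_zero, Finset.filter_eq_empty_iff]
      intro i _
      have := hle i
      omega

end PB

theorem stmt15 (k l m n : ℕ) (h1 : 1 ≤ m) (hm : m ≤ n) :
    (pullPFs k l m n).card
      = ∑ π ∈ SmnSet m n,
          ∏ i ∈ Finset.Icc 1 n, (Bval k π i + Fval k l π i + 1) := by
  classical
  rw [Finset.card_eq_sum_card_fiberwise
    (f := pullOutcome k l n) (t := SmnSet m n)
    (fun α hα => PB.outcome_mem h1 hm hα)]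
  apply Finset.sum_congr rfl
  intro π hπ
  exact PB.card_fiber (k := k) (l := l) h1 hm hπ
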